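/- A primitive sequence {ε_n} in the admissible set S for [a,b] (sequences of the form ε_n = (1/n!)∫(b−x)^n dμ for some Borel probability measure μ on [a,b]) is an extreme point of the convex set S if and only if there exists x ∈ [a,b] with ε_n = (b−x)^n/n! for all n ≥ 0, i.e., μ is a Dirac point mass. -/

import Mathlib

open MeasureTheory Filter
open scoped ENNReal

lemma stmt19_compl_null (μ : Measure ℝ) [IsProbabilityMeasure μ] {s : Set ℝ}
    (hs : MeasurableSet s) (hμ : μ s = 1) : μ sᶜ = 0 := by
  have := measure_compl (μ := μ) hs (measure_ne_top μ _)
  rw [hμ, measure_univ] at this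
  simpa using this

lemma stmt19_full_of_compl_null (μ : Measure ℝ) [IsProbabilityMeasure μ] {s : Set ℝ}
    (hs : MeasurableSet s) (hμ : μ sᶜ = 0) : μ s = 1 := by
  have := measure_compl (μ := μ) hs.compl (measure_ne_top μ _)
  rw [hμ, measure_univ, compl_compl] at this
  rw [this, tsub_zero]

lemma stmt19_ae_of_full (μ : Measure ℝ) [IsProbabilityMeasure μ] {s : Set ℝ}
    (hs : MeasurableSet s) (hμ : μ s = 1) : ∀ᵐ x ∂μ, x ∈ s := by
  rw [ae_iff]
  convert stmt19_compl_null μ hs hμ using 2; ext; simp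

lemma stmt19_integ_pow (a b : ℝ) (hab : a ≤ b) (μ : Measure ℝ) [IsProbabilityMeasure μ]
    (hμ : μ (Set.Icc a b) = 1) (n : ℕ) :
    Integrable (fun x => (b - x) ^ n) μ := by
  refine (integrable_const ((b - a)^n)).mono' ?_ ?_
  · exact Continuous.aestronglyMeasurable (by continuity)
  · refine (stmt19_ae_of_full μ measurableSet_Icc hμ).mono fun x hx => ?_
    have h1 : 0 ≤ b - x := by linarith [hx.2]
    have h2 : b - x ≤ b - a := by linarith [hx.1]
    have : ‖(b - x)^n‖ = (b-x)^n := by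
      rw [Real.norm_eq_abs, abs_of_nonneg (pow_nonneg h1 n)]
    rw [this]
    exact pow_le_pow_left₀ h1 h2 n

lemma stmt19_dirac_int (μ : Measure ℝ) [IsProbabilityMeasure μ] (x₀ : ℝ) (hx : μ {x₀} = 1)
    (f : ℝ → ℝ) : ∫ x, f x ∂μ = f x₀ := by
  have hc : μ {x₀}ᶜ = 0 := stmt19_compl_null μ (measurableSet_singleton x₀) hx
  have hae : ∀ᵐ x ∂μ, x = x₀ := by
    rw [ae_iff]; convert hc using 2; ext; simp
  have : ∫ x, f x ∂μ = ∫ _, f x₀ ∂μ := integral_congr_ae (hae.mono fun x h => by rw [h])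
  rw [this, integral_const, probReal_univ]; simp

lemma stmt19_var_expand (a b : ℝ) (hab : a ≤ b) (μ : Measure ℝ) [IsProbabilityMeasure μ]
    (hμ : μ (Set.Icc a b) = 1) :
    ∫ x, (b - x - (∫ y, (b - y) ∂μ))^2 ∂μ
      = ∫ x, (b - x)^2 ∂μ - (∫ y, (b - y) ∂μ)^2 := by
  set m := ∫ y, (b - y) ∂μ with hm
  have hi1 : Integrable (fun x => (b - x)) μ := by
    simpa using stmt19_integ_pow a b hab μ hμ 1
  have hi1' : Integrable (fun x => (2*m)*(b-x)) μ := hi1.const_mul (2*m)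
  have hi2 : Integrable (fun x => (b - x)^2) μ := stmt19_integ_pow a b hab μ hμ 2
  have hsub : Integrable (fun x => (b - x)^2 - (2*m)*(b-x)) μ := hi2.sub hi1'
  have e1 : ∫ x, (b - x - m)^2 ∂μ
      = ∫ x, (((b - x)^2 - (2*m)*(b-x)) + m^2) ∂μ :=
    integral_congr_ae (Filter.Eventually.of_forall fun x => by ring)
  have e2 : ∫ x, (((b - x)^2 - (2*m)*(b-x)) + m^2) ∂μ
      = (∫ x, (b - x)^2 ∂μ - ∫ x, (2*m)*(b-x) ∂μ) + ∫ _ : ℝ, m^2 ∂μ := by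
    rw [integral_add hsub (integrable_const _), integral_sub hi2 hi1']
  have e3 : ∫ x, (2*m)*(b-x) ∂μ = (2*m) * m := by
    rw [MeasureTheory.integral_const_mul]
  rw [e1, e2, e3, integral_const, probReal_univ]
  simp; ring

lemma stmt19_second_moment_ge (a b : ℝ) (hab : a ≤ b) (μ : Measure ℝ)
    [IsProbabilityMeasure μ] (hμ : μ (Set.Icc a b) = 1) :
    (∫ y, (b - y) ∂μ)^2 ≤ ∫ x, (b - x)^2 ∂μ := by
  have h0 : 0 ≤ ∫ x, (b - x - (∫ y, (b - y) ∂μ))^2 ∂μ :=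
    integral_nonneg fun x => sq_nonneg _
  rw [stmt19_var_expand a b hab μ hμ] at h0
  linarith

lemma stmt19_var_zero (a b : ℝ) (hab : a ≤ b) (μ : Measure ℝ) [IsProbabilityMeasure μ]
    (hμ : μ (Set.Icc a b) = 1)
    (h : ∫ x, (b - x)^2 ∂μ = (∫ y, (b - y) ∂μ)^2) :
    μ {b - ∫ y, (b - y) ∂μ} = 1 := by
  set m := ∫ y, (b - y) ∂μ with hm
  have hi1 : Integrable (fun x => (b - x)) μ := by
    simpa using stmt19_integ_pow a b hab μ hμ 1
  have hi1' : Integrable (fun x => (2*m)*(b-x)) μ := hi1.const_mul (2*m)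
  have hi2 : Integrable (fun x => (b - x)^2) μ := stmt19_integ_pow a b hab μ hμ 2
  have hig : Integrable (fun x => (b - x - m)^2) μ := by
    have : (fun x => (b - x - m)^2) = fun x => ((b - x)^2 - (2*m)*(b-x)) + m^2 := by
      funext x; ring
    rw [this]
    exact (hi2.sub hi1').add (integrable_const _)
  have hint : ∫ x, (b - x - m)^2 ∂μ = 0 := by
    rw [stmt19_var_expand a b hab μ hμ, h]
    ring
  have hz : (fun x => (b - x - m)^2) =ᵐ[μ] 0 :=
    (integral_eq_zero_iff_of_nonneg (fun x => sq_nonneg _) hig).mp hint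
  have hcompl : μ ({b - m}ᶜ) = 0 := by
    rw [show ({b - m}ᶜ : Set ℝ) = {x | ¬ (fun x => (b - x - m)^2) x = (0 : ℝ → ℝ) x} by
      ext x
      simp only [Set.mem_compl_iff, Set.mem_singleton_iff, Set.mem_setOf_eq, Pi.zero_apply]
      constructor
      · intro hne hsq
        exact hne (by nlinarith [pow_eq_zero_iff (n := 2) (two_ne_zero) |>.mp hsq])
      · intro hne heq; exact hne (by subst heq; ring)]
    exact hz
  exact stmt19_full_of_compl_null μ (measurableSet_singleton _) hcompl

set_option maxHeartbeats 1000000 in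
theorem stmt19 (a b : ℝ) (hab : a < b)
    (S : Set (ℕ → ℝ))
    (hS : S = {ε | ∃ μ : Measure ℝ, IsProbabilityMeasure μ ∧ μ (Set.Icc a b) = 1 ∧
      ∀ n : ℕ, ε n = (1 / (n.factorial : ℝ)) * ∫ x, (b - x) ^ n ∂μ})
    (ε : ℕ → ℝ) (hε : ε ∈ S) :
    ε ∈ Set.extremePoints ℝ S ↔
      ∃ x ∈ Set.Icc a b, ∀ n : ℕ, ε n = (b - x) ^ n / (n.factorial : ℝ) := by
  subst hS
  obtain ⟨μ, hμp, hμI, hμε⟩ := hε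
  haveI := hμp
  constructor
  · -- extreme → Dirac
    intro hext
    rw [mem_extremePoints] at hext
    by_cases hc : ∃ c, μ (Set.Iic c) ≠ 0 ∧ μ (Set.Iic c) ≠ 1
    · exfalso
      obtain ⟨c, ht0, ht1⟩ := hc
      set t := μ (Set.Iic c) with htdef
      have htop : t ≠ ⊤ := measure_ne_top μ _
      have htle : t ≤ 1 := prob_le_one
      have hIoi : μ (Set.Ioi c) = 1 - t := by
        rw [← Set.compl_Iic, measure_compl measurableSet_Iic (measure_ne_top μ _), measure_univ]
      have h1t0 : (1:ℝ≥0∞) - t ≠ 0 := fun h =>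
        ht1 (le_antisymm htle (tsub_eq_zero_iff_le.mp h))
      have h1ttop : (1:ℝ≥0∞) - t ≠ ⊤ :=
        (tsub_le_self.trans_lt (by norm_num : (1:ℝ≥0∞) < ⊤)).ne
      set μ₁ : Measure ℝ := t⁻¹ • μ.restrict (Set.Iic c) with hμ₁def
      set μ₂ : Measure ℝ := (1 - t)⁻¹ • μ.restrict (Set.Ioi c) with hμ₂def
      have hμ₁Iic : μ₁ (Set.Iic c) = 1 := by
        rw [hμ₁def, Measure.smul_apply, Measure.restrict_apply measurableSet_Iic,
          Set.inter_self, smul_eq_mul, ← htdef, ENNReal.inv_mul_cancel ht0 htop]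
      have hμ₂Ioi : μ₂ (Set.Ioi c) = 1 := by
        rw [hμ₂def, Measure.smul_apply, Measure.restrict_apply measurableSet_Ioi,
          Set.inter_self, smul_eq_mul, hIoi, ENNReal.inv_mul_cancel h1t0 h1ttop]
      haveI hp₁ : IsProbabilityMeasure μ₁ := by
        constructor
        rw [hμ₁def, Measure.smul_apply, Measure.restrict_apply_univ, smul_eq_mul, ← htdef,
          ENNReal.inv_mul_cancel ht0 htop]
      haveI hp₂ : IsProbabilityMeasure μ₂ := by
        constructor
        rw [hμ₂def, Measure.smul_apply, Measure.restrict_apply_univ, smul_eq_mul, hIoi,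
          ENNReal.inv_mul_cancel h1t0 h1ttop]
      have hI₁ : μ₁ (Set.Icc a b) = 1 := by
        refine stmt19_full_of_compl_null μ₁ measurableSet_Icc ?_
        rw [hμ₁def, Measure.smul_apply, smul_eq_mul]
        have h0 : μ.restrict (Set.Iic c) (Set.Icc a b)ᶜ = 0 := by
          rw [Measure.restrict_apply measurableSet_Icc.compl]
          exact measure_mono_null Set.inter_subset_left
            (stmt19_compl_null μ measurableSet_Icc hμI)
        rw [h0, mul_zero]
      have hI₂ : μ₂ (Set.Icc a b) = 1 := by
        refine stmt19_full_of_compl_null μ₂ measurableSet_Icc ?_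
        rw [hμ₂def, Measure.smul_apply, smul_eq_mul]
        have h0 : μ.restrict (Set.Ioi c) (Set.Icc a b)ᶜ = 0 := by
          rw [Measure.restrict_apply measurableSet_Icc.compl]
          exact measure_mono_null Set.inter_subset_left
            (stmt19_compl_null μ measurableSet_Icc hμI)
        rw [h0, mul_zero]
      have htr : t.toReal ≠ 0 := ENNReal.toReal_ne_zero.mpr ⟨ht0, htop⟩
      have h1tr : (1-t).toReal ≠ 0 := ENNReal.toReal_ne_zero.mpr ⟨h1t0, h1ttop⟩
      have hdecomp : ∀ n : ℕ, t.toReal * ∫ x, (b-x)^n ∂μ₁ + (1-t).toReal * ∫ x, (b-x)^n ∂μ₂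
          = ∫ x, (b-x)^n ∂μ := by
        intro n
        rw [hμ₁def, hμ₂def, integral_smul_measure, integral_smul_measure,
          ENNReal.toReal_inv, ENNReal.toReal_inv, smul_eq_mul, smul_eq_mul,
          ← mul_assoc, ← mul_assoc, mul_inv_cancel₀ htr, mul_inv_cancel₀ h1tr,
          one_mul, one_mul, ← Set.compl_Iic]
        exact integral_add_compl measurableSet_Iic (stmt19_integ_pow a b hab.le μ hμI n)
      have hseg : ε ∈ openSegment ℝ
          (fun n : ℕ => (1/(n.factorial:ℝ)) * ∫ x, (b-x)^n ∂μ₁)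
          (fun n : ℕ => (1/(n.factorial:ℝ)) * ∫ x, (b-x)^n ∂μ₂) := by
        refine ⟨t.toReal, (1-t).toReal, ENNReal.toReal_pos ht0 htop,
          ENNReal.toReal_pos h1t0 h1ttop, ?_, ?_⟩
        · rw [← ENNReal.toReal_add htop h1ttop, add_tsub_cancel_of_le htle]
          simp
        · funext n
          simp only [Pi.add_apply, Pi.smul_apply, smul_eq_mul]
          rw [hμε n, ← hdecomp n]
          ring
      obtain ⟨h1, h2⟩ := hext.2 _ ⟨μ₁, hp₁, hI₁, fun n => rfl⟩
        _ ⟨μ₂, hp₂, hI₂, fun n => rfl⟩ hseg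
      have hmeq : ∫ x, (b-x)^1 ∂μ₁ = ∫ x, (b-x)^1 ∂μ₂ := by
        have e1 := congrFun h1 1
        have e2 := congrFun h2 1
        simp only [Nat.factorial_one, Nat.cast_one, one_div, inv_one, one_mul] at e1 e2
        rw [e1, ← e2]
      have hub : b - c ≤ ∫ x, (b-x)^1 ∂μ₁ := by
        have hi := stmt19_integ_pow a b hab.le μ₁ hI₁ 1
        have hae := stmt19_ae_of_full μ₁ measurableSet_Iic hμ₁Iic
        have hmono := integral_mono_ae (integrable_const (b - c)) hi
          (hae.mono fun y hy => by
            simp only [Set.mem_Iic] at hy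
            simp only [pow_one]
            linarith)
        simpa using hmono
      have hae₂ := stmt19_ae_of_full μ₂ measurableSet_Ioi hμ₂Ioi
      have hi₂ := stmt19_integ_pow a b hab.le μ₂ hI₂ 1
      have hyc : Integrable (fun y => y - c) μ₂ := by
        refine ((integrable_const (b - c)).sub hi₂).congr
          (Filter.Eventually.of_forall fun y => ?_)
        simp only [Pi.sub_apply, pow_one]
        ring
      have h0le : 0 ≤ ∫ y, (y - c) ∂μ₂ :=
        integral_nonneg_of_ae (hae₂.mono fun y hy => by
          simp only [Set.mem_Ioi] at hy; simp only [Pi.zero_apply]; linarith)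
      have hne : ∫ y, (y - c) ∂μ₂ ≠ 0 := by
        intro h0
        have hz := (integral_eq_zero_iff_of_nonneg_ae
          (hae₂.mono fun y hy => by
            simp only [Set.mem_Ioi] at hy; simp only [Pi.zero_apply]; linarith) hyc).mp h0
        haveI : (ae μ₂).NeBot := ae_neBot.mpr (IsProbabilityMeasure.ne_zero μ₂)
        obtain ⟨y, hy1, hy2⟩ := (hz.and hae₂).exists
        simp only [Pi.zero_apply, Set.mem_Ioi] at hy1 hy2
        have : y - c = 0 := hy1
        linarith
      have hlt : ∫ x, (b-x)^1 ∂μ₂ < b - c := by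
        have e : ∫ x, (b-x)^1 ∂μ₂ = ∫ y, ((b-c) - (y-c)) ∂μ₂ :=
          integral_congr_ae (Filter.Eventually.of_forall fun y => by
            simp only [pow_one]; ring)
        rw [e, integral_sub (integrable_const _) hyc, integral_const, probReal_univ]
        have hpos : 0 < ∫ y, (y - c) ∂μ₂ := lt_of_le_of_ne h0le (Ne.symm hne)
        simp only [ENNReal.toReal_one, smul_eq_mul, one_mul]
        linarith
      linarith
    · push_neg at hc
      set T := {c : ℝ | μ (Set.Iic c) = 1} with hT
      have hbT : b ∈ T := by
        have h1 : (1:ℝ≥0∞) ≤ μ (Set.Iic b) := hμI ▸ measure_mono Set.Icc_subset_Iic_self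
        exact le_antisymm prob_le_one h1
      have hlow : ∀ c ∈ T, a ≤ c := by
        intro c hcT
        by_contra hca
        push_neg at hca
        have hsub : Set.Iic c ⊆ (Set.Icc a b)ᶜ := by
          intro y hy
          simp only [Set.mem_Iic] at hy
          simp only [Set.mem_compl_iff, Set.mem_Icc, not_and_or, not_le]
          left; linarith
        have h0 : μ (Set.Iic c) = 0 :=
          measure_mono_null hsub (stmt19_compl_null μ measurableSet_Icc hμI)
        have h1 : μ (Set.Iic c) = 1 := hcT
        rw [h0] at h1
        exact zero_ne_one h1
      have hTne : T.Nonempty := ⟨b, hbT⟩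
      have hbdd : BddBelow T := ⟨a, fun c hc => hlow c hc⟩
      set x₀ := sInf T with hx₀
      have hax : a ≤ x₀ := le_csInf hTne hlow
      have hxb : x₀ ≤ b := csInf_le hbdd hbT
      have hIic1 : ∀ d, x₀ < d → μ (Set.Iic d) = 1 := by
        intro d hd
        obtain ⟨c', hc'T, hc'd⟩ := exists_lt_of_csInf_lt hTne hd
        refine le_antisymm prob_le_one ?_
        calc (1:ℝ≥0∞) = μ (Set.Iic c') := hc'T.symm
        _ ≤ μ (Set.Iic d) := measure_mono (Set.Iic_subset_Iic.mpr hc'd.le)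
      have hIicx : μ (Set.Iic x₀) = 1 := by
        have heq : Set.Iic x₀ = ⋂ n : ℕ, Set.Iic (x₀ + ((n:ℝ)+1)⁻¹) := by
          ext y
          simp only [Set.mem_Iic, Set.mem_iInter]
          constructor
          · intro h n
            have hp : (0:ℝ) < ((n:ℝ)+1)⁻¹ := by positivity
            linarith
          · intro h
            by_contra hlt
            push_neg at hlt
            obtain ⟨n, hn⟩ := exists_nat_one_div_lt (sub_pos.mpr hlt)
            have := h n
            rw [one_div] at hn
            linarith
        have hmono : Antitone (fun n : ℕ => Set.Iic (x₀ + ((n:ℝ)+1)⁻¹)) := by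
          intro i j hij
          refine Set.Iic_subset_Iic.mpr ?_
          have hij' : (i:ℝ) + 1 ≤ (j:ℝ) + 1 := by
            have : (i:ℝ) ≤ (j:ℝ) := by exact_mod_cast hij
            linarith
          have : ((j:ℝ)+1)⁻¹ ≤ ((i:ℝ)+1)⁻¹ :=
            inv_anti₀ (by positivity) hij'
          linarith
        rw [heq, Directed.measure_iInter (fun n => measurableSet_Iic.nullMeasurableSet)
          hmono.directed_ge ⟨0, measure_ne_top μ _⟩]
        have hall : ∀ n : ℕ, μ (Set.Iic (x₀ + ((n:ℝ)+1)⁻¹)) = 1 := fun n => by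
          refine hIic1 _ ?_
          have hp : (0:ℝ) < ((n:ℝ)+1)⁻¹ := by positivity
          linarith
        simp only [hall, iInf_const]
      have hIio0 : μ (Set.Iio x₀) = 0 := by
        have heq : Set.Iio x₀ = ⋃ n : ℕ, Set.Iic (x₀ - ((n:ℝ)+1)⁻¹) := by
          ext y
          simp only [Set.mem_Iio, Set.mem_iUnion, Set.mem_Iic]
          constructor
          · intro h
            obtain ⟨n, hn⟩ := exists_nat_one_div_lt (sub_pos.mpr h)
            rw [one_div] at hn
            exact ⟨n, by linarith⟩
          · rintro ⟨n, hn⟩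
            have hp : (0:ℝ) < ((n:ℝ)+1)⁻¹ := by positivity
            linarith
        rw [heq]
        refine measure_iUnion_null fun n => ?_
        by_contra h0
        have h1 : μ (Set.Iic (x₀ - ((n:ℝ)+1)⁻¹)) = 1 := hc _ h0
        have hle : x₀ ≤ x₀ - ((n:ℝ)+1)⁻¹ := csInf_le hbdd h1
        have hp : (0:ℝ) < ((n:ℝ)+1)⁻¹ := by positivity
        linarith
      have hsing : μ {x₀} = 1 := by
        have hdiff : ({x₀} : Set ℝ) = Set.Iic x₀ \ Set.Iio x₀ := by
          ext y
          simp only [Set.mem_singleton_iff, Set.mem_diff, Set.mem_Iic, Set.mem_Iio, not_lt]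
          constructor
          · rintro rfl; exact ⟨le_refl _, le_refl _⟩
          · rintro ⟨h1, h2⟩; exact le_antisymm h1 h2
        rw [hdiff, measure_diff Set.Iio_subset_Iic_self measurableSet_Iio.nullMeasurableSet
          (measure_ne_top μ _), hIicx, hIio0, tsub_zero]
      refine ⟨x₀, ⟨hax, hxb⟩, fun n => ?_⟩
      rw [hμε n, stmt19_dirac_int μ x₀ hsing (fun y => (b - y)^n)]
      ring
  · -- Dirac → extreme
    rintro ⟨x, hx, hεx⟩
    rw [mem_extremePoints]
    refine ⟨⟨μ, hμp, hμI, hμε⟩, ?_⟩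
    rintro ε₁ ⟨μ₁, hp₁, hI₁, he₁⟩ ε₂ ⟨μ₂, hp₂, hI₂, he₂⟩ ⟨t, s, ht, hs, hts, heq⟩
    haveI := hp₁; haveI := hp₂
    set m₁ := ∫ y, (b - y) ∂μ₁ with hm₁
    set m₂ := ∫ y, (b - y) ∂μ₂ with hm₂
    set v₁ := ∫ y, (b - y)^2 ∂μ₁ with hv₁
    set v₂ := ∫ y, (b - y)^2 ∂μ₂ with hv₂
    have hε1eq : ε₁ 1 = m₁ := by
      rw [he₁ 1]; simp [hm₁]
    have hε2eq : ε₂ 1 = m₂ := by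
      rw [he₂ 1]; simp [hm₂]
    have hε1eq2 : ε₁ 2 = (1/2) * v₁ := by
      rw [he₁ 2]; norm_num [hv₁]
    have hε2eq2 : ε₂ 2 = (1/2) * v₂ := by
      rw [he₂ 2]; norm_num [hv₂]
    have hA : t * m₁ + s * m₂ = b - x := by
      have := congrFun heq 1
      simp only [Pi.add_apply, Pi.smul_apply, smul_eq_mul] at this
      rw [hε1eq, hε2eq] at this
      rw [this, hεx 1]; simp
    have hB : t * v₁ + s * v₂ = (b - x)^2 := by
      have := congrFun heq 2
      simp only [Pi.add_apply, Pi.smul_apply, smul_eq_mul] at this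
      rw [hε1eq2, hε2eq2] at this
      have h2 : ε 2 = (b - x)^2 / 2 := by rw [hεx 2]; norm_num
      rw [h2] at this
      linarith
    have hge₁ : m₁^2 ≤ v₁ := stmt19_second_moment_ge a b hab.le μ₁ hI₁
    have hge₂ : m₂^2 ≤ v₂ := stmt19_second_moment_ge a b hab.le μ₂ hI₂
    have hs' : s = 1 - t := by linarith
    subst hs'
    have key : t * (v₁ - m₁^2) + (1-t) * (v₂ - m₂^2) + t*(1-t)*(m₁ - m₂)^2 = 0 := by
      linear_combination hB - (t*m₁ + (1-t)*m₂ + (b - x)) * hA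
    have ht1 : t < 1 := by linarith
    have hv1e : v₁ = m₁^2 := by
      nlinarith [mul_pos ht hs, sq_nonneg (m₁ - m₂),
        mul_nonneg ht.le (sub_nonneg.mpr hge₁), mul_nonneg hs.le (sub_nonneg.mpr hge₂),
        mul_nonneg (mul_nonneg ht.le hs.le) (sq_nonneg (m₁ - m₂))]
    have hv2e : v₂ = m₂^2 := by
      nlinarith [mul_nonneg ht.le (sub_nonneg.mpr hge₁), mul_nonneg hs.le (sub_nonneg.mpr hge₂),
        mul_nonneg (mul_nonneg ht.le hs.le) (sq_nonneg (m₁ - m₂))]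
    have hm12 : m₁ = m₂ := by
      have h0 : (m₁ - m₂)^2 = 0 := by
        nlinarith [mul_nonneg ht.le (sub_nonneg.mpr hge₁),
          mul_nonneg hs.le (sub_nonneg.mpr hge₂), mul_pos ht hs, sq_nonneg (m₁ - m₂)]
      have := pow_eq_zero_iff (n := 2) two_ne_zero |>.mp h0
      linarith
    have hm1x : m₁ = b - x := by linear_combination hA + (1-t)*hm12
    have hd₁ : μ₁ {x} = 1 := by
      have := stmt19_var_zero a b hab.le μ₁ hI₁ (by rw [← hv₁, ← hm₁, hv1e])
      rwa [← hm₁, hm1x, show b - (b - x) = x by ring] at this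
    have hd₂ : μ₂ {x} = 1 := by
      have := stmt19_var_zero a b hab.le μ₂ hI₂ (by rw [← hv₂, ← hm₂, hv2e])
      rwa [← hm₂, ← hm12, hm1x, show b - (b - x) = x by ring] at this
    constructor
    · funext n
      rw [he₁ n, stmt19_dirac_int μ₁ x hd₁ (fun y => (b - y)^n), hεx n]
      ring
    · funext n
      rw [he₂ n, stmt19_dirac_int μ₂ x hd₂ (fun y => (b - y)^n), hεx n]
      ring
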